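/- arXiv:1003.1506 — 2 statements merged into one kernel-verified Lean document; each statement's English description precedes it below -/
import Mathlib

section
/- Suppose J(r) = (1/L) V(|r|/L) where V : [0,∞) → ℝ is Lipschitz continuous with Lipschitz constant ℓ and V(r) = 0 for r > 1, and suppose Q ≤ L. Then for every coarse cell index k, Σ_{l ≠ k} sup_{σ ∈ S_N} |Δ_{kl}J(σ)| ≤ 16 Q² ℓ / L (in the sum, Δ_{kl}J is understood with its indices ordered so that the smaller index comes first). -/
open Finset

/-- The spin value of a site: `true ↦ +1`, `false ↦ -1`. -/
def spin (b : Bool) : ℤ := if b then 1 else -1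

/-- The coarse cell `C_k = {kQ, …, (k+1)Q - 1}` inside the lattice `Fin (M*Q)`. -/
def cell (M Q : ℕ) (k : Fin M) : Finset (Fin (M * Q)) :=
  univ.filter (fun x => x.val / Q = k.val)

/-- The coarse-graining map `F(σ)(k) = Σ_{x ∈ C_k} σ(x)`. -/
def cg (M Q : ℕ) (σ : Fin (M * Q) → Bool) (k : Fin M) : ℤ :=
  ∑ x ∈ cell M Q k, spin (σ x)

/-- The long-range Hamiltonian `H^l(σ) = -(1/2) Σ_{x ≠ y} J(x-y) σ(x) σ(y)`. -/
noncomputable def Hlong (M Q : ℕ) (J : ℤ → ℝ) (σ : Fin (M * Q) → Bool) : ℝ :=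
  -(1 / 2) * ∑ x : Fin (M * Q), ∑ y ∈ univ.filter (fun y => y ≠ x),
    J ((x.val : ℤ) - (y.val : ℤ)) * (spin (σ x) : ℝ) * (spin (σ y) : ℝ)

/-- Cell-averaged couplings `J̄(k,l)`. -/
noncomputable def Jbar (M Q : ℕ) (J : ℤ → ℝ) (k l : Fin M) : ℝ :=
  if k = l then
    (∑ x ∈ cell M Q k, ∑ y ∈ (cell M Q k).filter (fun y => y ≠ x),
        J ((x.val : ℤ) - (y.val : ℤ))) / ((Q : ℝ) * ((Q : ℝ) - 1))
  else
    (∑ x ∈ cell M Q k, ∑ y ∈ cell M Q l, J ((x.val : ℤ) - (y.val : ℤ))) / ((Q : ℝ) ^ 2)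

/-- The coarse-grained long-range Hamiltonian `H̄^{l,(0)}(η)`. -/
noncomputable def Hlong0 (M Q : ℕ) (J : ℤ → ℝ) (η : Fin M → ℤ) : ℝ :=
  -(1 / 2) * (∑ k : Fin M, ∑ l ∈ univ.filter (fun l => l ≠ k),
      Jbar M Q J k l * (η k : ℝ) * (η l : ℝ))
  - (1 / 2) * ∑ k : Fin M, Jbar M Q J k k * ((η k : ℝ) ^ 2 - (Q : ℝ))

/-- The pair term `Δ_{kl}J(σ)` of the decomposition of `H^l - H̄^{l,(0)} ∘ F`. -/
noncomputable def DeltaJ (M Q : ℕ) (J : ℤ → ℝ) (k l : Fin M)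
    (σ : Fin (M * Q) → Bool) : ℝ :=
  -(1 / 2) * (2 - if k = l then 1 else 0) *
    ∑ x ∈ cell M Q k, ∑ y ∈ (cell M Q l).filter (fun y => y ≠ x),
      (J ((x.val : ℤ) - (y.val : ℤ)) - Jbar M Q J k l) * (spin (σ x) : ℝ) * (spin (σ y) : ℝ)

lemma mem_cell_iff {M Q : ℕ} (hQ : 0 < Q) (k : Fin M) (x : Fin (M * Q)) :
    x ∈ cell M Q k ↔ k.val * Q ≤ x.val ∧ x.val < k.val * Q + Q := by
  simp only [cell, mem_filter, mem_univ, true_and]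
  constructor
  · intro h
    rw [← h]
    exact ⟨Nat.div_mul_le_self _ _, Nat.lt_div_mul_add hQ⟩
  · rintro ⟨h1, h2⟩
    exact Nat.div_eq_of_lt_le h1 (by rw [Nat.succ_mul]; exact h2)

lemma cell_card {M Q : ℕ} (hQ : 0 < Q) (k : Fin M) : (cell M Q k).card = Q := by
  have himg : cell M Q k = (univ : Finset (Fin Q)).image
      (fun j : Fin Q => (⟨k.val * Q + j.val, by
        have h1 : k.val * Q + j.val < (k.val + 1) * Q := by
          rw [Nat.succ_mul]; exact Nat.add_lt_add_left j.isLt _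
        exact lt_of_lt_of_le h1 (Nat.mul_le_mul_right _ k.isLt)⟩ : Fin (M * Q))) := by
    ext x
    rw [mem_cell_iff hQ]
    simp only [mem_image, mem_univ, true_and]
    constructor
    · rintro ⟨h1, h2⟩
      refine ⟨⟨x.val - k.val * Q, by omega⟩, ?_⟩
      apply Fin.ext; simp; omega
    · rintro ⟨j, rfl⟩
      simp only
      constructor
      · exact Nat.le_add_right _ _
      · exact Nat.add_lt_add_left j.isLt _
  rw [himg, card_image_of_injective _ ?_, card_univ, Fintype.card_fin]
  intro a b hab
  have := congrArg Fin.val hab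
  simp only at this
  exact Fin.ext (by omega)

lemma cell_disj {M Q : ℕ} {a b : Fin M} (hab : a ≠ b) {x y : Fin (M * Q)}
    (hx : x ∈ cell M Q a) (hy : y ∈ cell M Q b) : y ≠ x := by
  simp only [cell, mem_filter] at hx hy
  intro h; subst h
  exact hab (Fin.ext (hx.2 ▸ hy.2))

/-- summability of the pair terms: for each coarse cell `k`, the sum over
`l ≠ k` of the sup over configurations of `|Δ_{kl}J|` is at most `16Q²ℓ/L`. -/
theorem statement8 (M Q : ℕ) (hM : 1 ≤ M) (hQ : 2 ≤ Q)
    (L l : ℝ) (hL : 0 < L) (hl : 0 ≤ l) (hQL : (Q : ℝ) ≤ L)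
    (V : ℝ → ℝ) (hV : ∀ a b : ℝ, 0 ≤ a → 0 ≤ b → |V a - V b| ≤ l * |a - b|)
    (hVsupp : ∀ r : ℝ, 1 < r → V r = 0)
    (J : ℤ → ℝ) (hJ : ∀ r : ℤ, J r = (1 / L) * V (|(r : ℝ)| / L)) :
    ∀ k : Fin M,
      ∑ l' ∈ univ.filter (fun l' => l' ≠ k),
        (⨆ σ : Fin (M * Q) → Bool, |DeltaJ M Q J (min k l') (max k l') σ|)
      ≤ 16 * (Q : ℝ) ^ 2 * l / L := by
  intro k
  have hQ0 : 0 < Q := by omega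
  have hQR : (0 : ℝ) < Q := by exact_mod_cast hQ0
  -- Lipschitz bound on J
  have hJlip : ∀ r s : ℤ, |(|(r : ℝ)| - |(s : ℝ)|)| ≤ 2 * Q →
      |J r - J s| ≤ 2 * Q * l / L ^ 2 := by
    intro r s h
    rw [hJ r, hJ s, ← mul_sub, abs_mul, abs_of_pos (show (0:ℝ) < 1/L by positivity)]
    have hv := hV (|(r : ℝ)| / L) (|(s : ℝ)| / L) (by positivity) (by positivity)
    have h2 : |(|(r : ℝ)| / L - |(s : ℝ)| / L)| ≤ 2 * Q / L := by
      rw [div_sub_div_same, abs_div, abs_of_pos hL]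
      gcongr
    calc (1/L) * |V (|(r : ℝ)| / L) - V (|(s : ℝ)| / L)|
        ≤ (1/L) * (l * (2 * Q / L)) := by
          apply mul_le_mul_of_nonneg_left _ (by positivity)
          exact le_trans hv (mul_le_mul_of_nonneg_left h2 hl)
      _ = 2 * Q * l / L ^ 2 := by field_simp
  -- pairwise bound between two cells
  have hpair : ∀ (a b : Fin M), ∀ x ∈ cell M Q a, ∀ x' ∈ cell M Q a,
      ∀ y ∈ cell M Q b, ∀ y' ∈ cell M Q b,
      |J ((x.val : ℤ) - (y.val : ℤ)) - J ((x'.val : ℤ) - (y'.val : ℤ))| ≤ 2 * Q * l / L ^ 2 := by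
    intro a b x hx x' hx' y hy y' hy'
    apply hJlip
    obtain ⟨ha1, ha2⟩ := (mem_cell_iff hQ0 a x).mp hx
    obtain ⟨ha3, ha4⟩ := (mem_cell_iff hQ0 a x').mp hx'
    obtain ⟨hb1, hb2⟩ := (mem_cell_iff hQ0 b y).mp hy
    obtain ⟨hb3, hb4⟩ := (mem_cell_iff hQ0 b y').mp hy'
    have key : |((x.val : ℤ) - (y.val : ℤ) : ℝ) - (((x'.val : ℤ) - (y'.val : ℤ) : ℤ) : ℝ)| ≤ 2 * Q := by
      have c1 : ((a.val * Q : ℕ) : ℝ) ≤ (x.val : ℝ) := Nat.cast_le.mpr ha1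
      have c2 : (x.val : ℝ) < ((a.val * Q + Q : ℕ) : ℝ) := Nat.cast_lt.mpr ha2
      have c3 : ((a.val * Q : ℕ) : ℝ) ≤ (x'.val : ℝ) := Nat.cast_le.mpr ha3
      have c4 : (x'.val : ℝ) < ((a.val * Q + Q : ℕ) : ℝ) := Nat.cast_lt.mpr ha4
      have c5 : ((b.val * Q : ℕ) : ℝ) ≤ (y.val : ℝ) := Nat.cast_le.mpr hb1
      have c6 : (y.val : ℝ) < ((b.val * Q + Q : ℕ) : ℝ) := Nat.cast_lt.mpr hb2
      have c7 : ((b.val * Q : ℕ) : ℝ) ≤ (y'.val : ℝ) := Nat.cast_le.mpr hb3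
      have c8 : (y'.val : ℝ) < ((b.val * Q + Q : ℕ) : ℝ) := Nat.cast_lt.mpr hb4
      push_cast at c1 c2 c3 c4 c5 c6 c7 c8 ⊢
      rw [abs_le]
      constructor <;> linarith
    calc |(|(((x.val : ℤ) - (y.val : ℤ) : ℤ) : ℝ)| - |(((x'.val : ℤ) - (y'.val : ℤ) : ℤ) : ℝ)|)|
        ≤ |(((x.val : ℤ) - (y.val : ℤ) : ℤ) : ℝ) - (((x'.val : ℤ) - (y'.val : ℤ) : ℤ) : ℝ)| :=
          abs_abs_sub_abs_le_abs_sub _ _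
      _ ≤ 2 * Q := by push_cast at key ⊢; exact key
  -- |J(x-y) - Jbar a b| bound for a ≠ b
  have hbar : ∀ (a b : Fin M), a ≠ b → ∀ x ∈ cell M Q a, ∀ y ∈ cell M Q b,
      |J ((x.val : ℤ) - (y.val : ℤ)) - Jbar M Q J a b| ≤ 2 * Q * l / L ^ 2 := by
    intro a b hab x hx y hy
    have e1 : ∑ x' ∈ cell M Q a, ∑ y' ∈ cell M Q b,
        (J ((x.val : ℤ) - (y.val : ℤ)) - J ((x'.val : ℤ) - (y'.val : ℤ)))
        = (Q : ℝ) ^ 2 * J ((x.val : ℤ) - (y.val : ℤ))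
          - ∑ x' ∈ cell M Q a, ∑ y' ∈ cell M Q b, J ((x'.val : ℤ) - (y'.val : ℤ)) := by
      simp only [Finset.sum_sub_distrib, Finset.sum_const, cell_card hQ0, nsmul_eq_mul]
      ring
    have e2 : J ((x.val : ℤ) - (y.val : ℤ)) - Jbar M Q J a b
        = (∑ x' ∈ cell M Q a, ∑ y' ∈ cell M Q b,
            (J ((x.val : ℤ) - (y.val : ℤ)) - J ((x'.val : ℤ) - (y'.val : ℤ)))) / (Q : ℝ) ^ 2 := by
      rw [Jbar, if_neg hab, e1]
      field_simp
    rw [e2, abs_div, abs_of_pos (by positivity : (0:ℝ) < (Q:ℝ)^2), div_le_iff₀ (by positivity)]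
    calc |∑ x' ∈ cell M Q a, ∑ y' ∈ cell M Q b,
            (J ((x.val : ℤ) - (y.val : ℤ)) - J ((x'.val : ℤ) - (y'.val : ℤ)))|
        ≤ ∑ x' ∈ cell M Q a, ∑ y' ∈ cell M Q b,
            |J ((x.val : ℤ) - (y.val : ℤ)) - J ((x'.val : ℤ) - (y'.val : ℤ))| := by
          refine le_trans (Finset.abs_sum_le_sum_abs _ _) (Finset.sum_le_sum fun x' _ => ?_)
          exact Finset.abs_sum_le_sum_abs _ _
      _ ≤ ∑ x' ∈ cell M Q a, ∑ y' ∈ cell M Q b, (2 * Q * l / L ^ 2) := by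
          refine Finset.sum_le_sum fun x' hx' => Finset.sum_le_sum fun y' hy' => ?_
          exact hpair a b x hx x' hx' y hy y' hy'
      _ = 2 * Q * l / L ^ 2 * (Q : ℝ) ^ 2 := by
          simp only [Finset.sum_const, cell_card hQ0, nsmul_eq_mul]
          ring
  -- |spin| = 1
  have hspin : ∀ c : Bool, |((spin c : ℤ) : ℝ)| = 1 := by
    intro c; cases c <;> simp [spin]
  -- main pointwise bound on DeltaJ
  have hdelta : ∀ (a b : Fin M), a ≠ b → ∀ σ : Fin (M * Q) → Bool,
      |DeltaJ M Q J a b σ| ≤ (Q : ℝ) ^ 2 * (2 * Q * l / L ^ 2) := by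
    intro a b hab σ
    rw [DeltaJ, if_neg hab]
    rw [abs_mul]
    have hc : |(-(1/2) * (2 - (0:ℝ)))| = 1 := by norm_num
    rw [hc, one_mul]
    have hfilt : ∀ x ∈ cell M Q a,
        (cell M Q b).filter (fun y => y ≠ x) = cell M Q b := by
      intro x hx
      exact Finset.filter_true_of_mem fun y hy => cell_disj hab hx hy
    rw [Finset.sum_congr rfl fun x hx => by rw [hfilt x hx]]
    calc |∑ x ∈ cell M Q a, ∑ y ∈ cell M Q b,
            (J ((x.val : ℤ) - (y.val : ℤ)) - Jbar M Q J a b)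
              * ((spin (σ x) : ℤ) : ℝ) * ((spin (σ y) : ℤ) : ℝ)|
        ≤ ∑ x ∈ cell M Q a, ∑ y ∈ cell M Q b,
            |(J ((x.val : ℤ) - (y.val : ℤ)) - Jbar M Q J a b)
              * ((spin (σ x) : ℤ) : ℝ) * ((spin (σ y) : ℤ) : ℝ)| := by
          refine le_trans (Finset.abs_sum_le_sum_abs _ _) (Finset.sum_le_sum fun x _ => ?_)
          exact Finset.abs_sum_le_sum_abs _ _
      _ ≤ ∑ x ∈ cell M Q a, ∑ y ∈ cell M Q b, (2 * Q * l / L ^ 2) := by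
          refine Finset.sum_le_sum fun x hx => Finset.sum_le_sum fun y hy => ?_
          rw [abs_mul, abs_mul, hspin, hspin, mul_one, mul_one]
          exact hbar a b hab x hx y hy
      _ = (Q : ℝ) ^ 2 * (2 * Q * l / L ^ 2) := by
          simp only [Finset.sum_const, cell_card hQ0, nsmul_eq_mul]
          ring
  -- vanishing of DeltaJ when all couplings between the two cells vanish
  have hfar : ∀ (a b : Fin M), a ≠ b →
      (∀ x ∈ cell M Q a, ∀ y ∈ cell M Q b, J ((x.val : ℤ) - (y.val : ℤ)) = 0) →
      ∀ σ : Fin (M * Q) → Bool, DeltaJ M Q J a b σ = 0 := by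
    intro a b hab h0 σ
    have hJb : Jbar M Q J a b = 0 := by
      rw [Jbar, if_neg hab]
      rw [Finset.sum_eq_zero fun x hx => Finset.sum_eq_zero fun y hy => h0 x hx y hy, zero_div]
    rw [DeltaJ, hJb]
    rw [Finset.sum_eq_zero, mul_zero]
    intro x hx
    refine Finset.sum_eq_zero fun y hy => ?_
    rw [h0 x hx y (Finset.mem_filter.mp hy).1]
    ring
  -- far criterion
  have hfarJ : ∀ (a b : Fin M), a.val < b.val → (L / Q + 1 : ℝ) < ((b.val - a.val : ℕ) : ℝ) →
      ∀ x ∈ cell M Q a, ∀ y ∈ cell M Q b, J ((x.val : ℤ) - (y.val : ℤ)) = 0 := by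
    intro a b hab hd x hx y hy
    rw [hJ]
    rw [hVsupp _ ?_, mul_zero]
    rw [lt_div_iff₀ hL, one_mul]
    obtain ⟨ha1, ha2⟩ := (mem_cell_iff hQ0 a x).mp hx
    obtain ⟨hb1, hb2⟩ := (mem_cell_iff hQ0 b y).mp hy
    have hdr : ((b.val : ℝ) - a.val) > L / Q + 1 := by
      have : ((b.val - a.val : ℕ) : ℝ) = (b.val : ℝ) - a.val := by
        push_cast [Nat.cast_sub (le_of_lt hab)]; ring
      linarith [this ▸ hd]
    have c1 : (x.val : ℝ) < (a.val : ℝ) * Q + Q := by exact_mod_cast Nat.cast_lt.mpr ha2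
    have c2 : ((b.val : ℝ)) * Q ≤ (y.val : ℝ) := by exact_mod_cast Nat.cast_le.mpr hb1
    have hgap : L < (y.val : ℝ) - (x.val : ℝ) := by
      have h1 : L / Q + 1 < (b.val : ℝ) - a.val := hdr
      have h2 : L < ((b.val : ℝ) - a.val - 1) * Q := by
        rw [← div_lt_iff₀ hQR] at *
        linarith
      nlinarith
    push_cast
    rw [abs_sub_comm]
    exact lt_of_lt_of_le hgap (le_abs_self _)
  -- the near set and counting
  set T : ℕ := ⌊L / (Q : ℝ)⌋₊ + 1 with hT
  set B : ℝ := (Q : ℝ) ^ 2 * (2 * Q * l / L ^ 2) with hB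
  have hB0 : 0 ≤ B := by positivity
  set Snear : Finset (Fin M) := univ.filter
    (fun l' => l' ≠ k ∧ max k.val l'.val - min k.val l'.val ≤ T) with hS
  -- min < max vals for l' ≠ k
  have hminmax : ∀ l' : Fin M, l' ≠ k →
      (min k l').val < (max k l').val ∧ (min k l' ≠ max k l') := by
    intro l' h
    have : min k l' < max k l' := min_lt_max.mpr (fun hkl => h hkl.symm)
    exact ⟨this, ne_of_lt this⟩
  -- step 1: restrict the sum to Snear
  have hstep1 : ∑ l' ∈ univ.filter (fun l' => l' ≠ k),
        (⨆ σ : Fin (M * Q) → Bool, |DeltaJ M Q J (min k l') (max k l') σ|)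
      = ∑ l' ∈ Snear, (⨆ σ : Fin (M * Q) → Bool, |DeltaJ M Q J (min k l') (max k l') σ|) := by
    refine (Finset.sum_subset ?_ ?_).symm
    · intro l' hl'
      simp only [hS, mem_filter, mem_univ, true_and] at hl' ⊢
      exact hl'.1
    · intro l' hl' hnl'
      simp only [mem_filter, mem_univ, true_and] at hl'
      simp only [hS, mem_filter, mem_univ, true_and, not_and] at hnl'
      have hfarcond : (L / Q + 1 : ℝ) < (((max k l').val - (min k l').val : ℕ) : ℝ) := by
        have h1 : ¬ (max k.val l'.val - min k.val l'.val ≤ T) := hnl' hl'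
        have h2 : T + 1 ≤ max k.val l'.val - min k.val l'.val := by omega
        have h3 : (L / Q : ℝ) < (⌊L / (Q : ℝ)⌋₊ : ℝ) + 1 := Nat.lt_floor_add_one _
        have h4 : ((T : ℕ) : ℝ) + 1 ≤ (((max k l').val - (min k l').val : ℕ) : ℝ) := by
          exact_mod_cast Nat.cast_le.mpr h2
        have h5 : ((T : ℕ) : ℝ) = (⌊L / (Q : ℝ)⌋₊ : ℝ) + 1 := by rw [hT]; push_cast; ring
        linarith
      obtain ⟨hlt, hne⟩ := hminmax l' hl'
      have hz : ∀ σ : Fin (M * Q) → Bool, |DeltaJ M Q J (min k l') (max k l') σ| = 0 := by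
        intro σ
        rw [hfar _ _ hne (hfarJ _ _ hlt hfarcond) σ, abs_zero]
      calc (⨆ σ : Fin (M * Q) → Bool, |DeltaJ M Q J (min k l') (max k l') σ|)
          = ⨆ _ : Fin (M * Q) → Bool, (0 : ℝ) := by
            congr 1; funext σ; exact hz σ
        _ = 0 := ciSup_const
  -- step 2: bound each term on Snear
  have hstep2 : ∑ l' ∈ Snear, (⨆ σ : Fin (M * Q) → Bool, |DeltaJ M Q J (min k l') (max k l') σ|)
      ≤ (Snear.card : ℝ) * B := by
    rw [← nsmul_eq_mul]
    refine Finset.sum_le_card_nsmul _ _ _ fun l' hl' => ?_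
    simp only [hS, mem_filter, mem_univ, true_and] at hl'
    obtain ⟨hlt, hne⟩ := hminmax l' hl'.1
    exact ciSup_le fun σ => hdelta _ _ hne σ
  -- step 3: counting
  have hcount : Snear.card ≤ 2 * T := by
    have hmaps : ∀ l' ∈ Snear, ((l'.val : ℤ) - k.val) ∈ (Finset.Icc (-(T : ℤ)) (T : ℤ)).erase 0 := by
      intro l' hl'
      simp only [hS, mem_filter, mem_univ, true_and] at hl'
      obtain ⟨hne, hdist⟩ := hl'
      have hvne : l'.val ≠ k.val := fun h => hne (Fin.ext h)
      simp only [Finset.mem_erase, Finset.mem_Icc]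
      omega
    have hinj : Set.InjOn (fun l' : Fin M => (l'.val : ℤ) - k.val) Snear := by
      intro a _ b _ h
      simp only at h
      exact Fin.ext (by omega)
    have := Finset.card_le_card_of_injOn _ hmaps hinj
    have hcardIcc : ((Finset.Icc (-(T : ℤ)) (T : ℤ)).erase 0).card = 2 * T := by
      rw [Finset.card_erase_of_mem (by simp [Finset.mem_Icc]), Int.card_Icc]
      omega
    omega
  -- final arithmetic
  have hTle : ((T : ℕ) : ℝ) ≤ L / Q + 1 := by
    rw [hT]; push_cast
    have := Nat.floor_le (show (0:ℝ) ≤ L / Q by positivity)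
    linarith
  have hLQ1 : (1 : ℝ) ≤ L / Q := (one_le_div hQR).mpr hQL
  have hcardR : (Snear.card : ℝ) ≤ 4 * (L / Q) := by
    have h1 : (Snear.card : ℝ) ≤ 2 * T := by exact_mod_cast Nat.cast_le.mpr hcount
    have : (2 : ℝ) * T ≤ 2 * (L / Q + 1) := by
      have : ((T : ℕ) : ℝ) ≤ L / Q + 1 := hTle
      linarith
    linarith
  rw [hstep1]
  refine le_trans hstep2 (le_trans (mul_le_mul_of_nonneg_right hcardR hB0) ?_)
  have heq : 4 * (L / Q) * B = 8 * (Q : ℝ) ^ 2 * l / L := by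
    rw [hB]; field_simp; ring
  rw [heq]
  rw [div_le_div_iff₀ hL hL]
  nlinarith [sq_nonneg (Q:ℝ), mul_nonneg (mul_nonneg (sq_nonneg (Q:ℝ)) hl) (le_of_lt hL)]
end

section
/- In the single-cell nearest-neighbour setting with |λ| < 1, the error term f^s admits the a posteriori bound: for all s₋, s₊ ∈ {−1,+1}, |f^s(η; s₋, s₊)| ≤ λ² |Φ^{1,Q}(η) − Φ^1(η) Φ^Q(η)| / (1 − |λ|)². -/
open Finset

/-- Configurations of a `Q`-site cell with total magnetization `η`. -/
def cellSet (Q : ℕ) (η : ℤ) : Finset (Fin Q → Bool) :=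
  univ.filter (fun τ => ∑ i, spin (τ i) = η)

/-- The first site of the cell. -/
def site1 (Q : ℕ) (hQ : 0 < Q) : Fin Q := ⟨0, hQ⟩

/-- The last site of the cell. -/
def siteQ (Q : ℕ) (hQ : 0 < Q) : Fin Q := ⟨Q - 1, Nat.sub_lt hQ one_pos⟩

/-- The internal nearest-neighbour Hamiltonian `h(τ) = K Σ_{i=1}^{Q-1} τ(i) τ(i+1)`. -/
noncomputable def hcell (K : ℝ) (Q : ℕ) (τ : Fin Q → Bool) : ℝ :=
  K * ∑ i : Fin (Q - 1),
    ((spin (τ ⟨i.val, by have := i.isLt; omega⟩) : ℝ) *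
     (spin (τ ⟨i.val + 1, by have := i.isLt; omega⟩) : ℝ))

/-- The free-boundary single-cell partition function `Ẑ(η)`. -/
noncomputable def Zhat (β K : ℝ) (Q : ℕ) (η : ℤ) : ℝ :=
  ∑ τ ∈ cellSet Q η, Real.exp (-β * hcell K Q τ)

/-- `Φ^1(η)`: expectation of the first spin under `P̂_η`. -/
noncomputable def Phi1 (β K : ℝ) (Q : ℕ) (hQ : 0 < Q) (η : ℤ) : ℝ :=
  (∑ τ ∈ cellSet Q η, (spin (τ (site1 Q hQ)) : ℝ) * Real.exp (-β * hcell K Q τ)) /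
    Zhat β K Q η

/-- `Φ^Q(η)`: expectation of the last spin under `P̂_η`. -/
noncomputable def PhiQ (β K : ℝ) (Q : ℕ) (hQ : 0 < Q) (η : ℤ) : ℝ :=
  (∑ τ ∈ cellSet Q η, (spin (τ (siteQ Q hQ)) : ℝ) * Real.exp (-β * hcell K Q τ)) /
    Zhat β K Q η

/-- `Φ^{1,Q}(η)`: expectation of the product of the endpoint spins under `P̂_η`. -/
noncomputable def Phi1Q (β K : ℝ) (Q : ℕ) (hQ : 0 < Q) (η : ℤ) : ℝ :=
  (∑ τ ∈ cellSet Q η,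
      ((spin (τ (site1 Q hQ)) * spin (τ (siteQ Q hQ)) : ℤ) : ℝ) *
        Real.exp (-β * hcell K Q τ)) /
    Zhat β K Q η

/-- The single-cell partition function with boundary conditions `s₋, s₊ ∈ {-1,0,+1}`
(`0` encoding a free boundary). -/
noncomputable def ZB (β K : ℝ) (Q : ℕ) (hQ : 0 < Q) (η : ℤ) (sm sp : ℝ) : ℝ :=
  ∑ τ ∈ cellSet Q η,
    Real.exp (-β * (K * sm * (spin (τ (site1 Q hQ)) : ℝ) + hcell K Q τ +
      K * (spin (τ (siteQ Q hQ)) : ℝ) * sp))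


lemma spin_cases (b : Bool) : (spin b : ℝ) = 1 ∨ (spin b : ℝ) = -1 := by
  cases b <;> simp [spin]

lemma abs_spin (b : Bool) : |(spin b : ℝ)| = 1 := by
  rcases spin_cases b with h | h <;> simp [h]

lemma tanh_mul_cosh (x : ℝ) : Real.tanh x * Real.cosh x = Real.sinh x := by
  rw [Real.tanh_eq_sinh_div_cosh]; field_simp

lemma exp_boundary (x s σ : ℝ) (hs : s = 1 ∨ s = -1) (hσ : σ = 1 ∨ σ = -1) :
    Real.exp (-(x * s * σ)) = Real.cosh x * (1 - Real.tanh x * s * σ) := by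
  have h1 := tanh_mul_cosh x
  have h2 := Real.cosh_sub_sinh x
  have h3 := Real.cosh_add_sinh x
  rcases hs with rfl | rfl <;> rcases hσ with rfl | rfl <;> ring_nf <;> nlinarith

lemma cell_nonempty (Q : ℕ) (η : ℤ) (hη : |η| ≤ (Q : ℤ)) (hpar : (η + Q) % 2 = 0) :
    (cellSet Q η).Nonempty := by
  have h2 : (2:ℤ) ∣ (η + Q) := Int.dvd_of_emod_eq_zero hpar
  obtain ⟨k, hk⟩ := h2
  obtain ⟨hl, hr⟩ := abs_le.mp hη
  have hk0 : 0 ≤ k := by omega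
  have hkQ : k ≤ (Q:ℤ) := by omega
  obtain ⟨m, rfl⟩ := Int.eq_ofNat_of_zero_le hk0
  have hmQ : m ≤ Q := by exact_mod_cast hkQ
  refine ⟨fun i => decide (i.val < m), ?_⟩
  simp only [cellSet, mem_filter, mem_univ, true_and]
  have : ∀ i : Fin Q, spin (decide (i.val < m)) = (if i.val < m then (1:ℤ) else -1) := by
    intro i
    by_cases h : i.val < m <;> simp [spin, h]
  rw [Finset.sum_congr rfl fun i _ => this i]
  rw [Fin.sum_univ_eq_sum_range (fun i => if i < m then (1:ℤ) else -1)]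
  rw [Finset.range_eq_Ico, ← Finset.sum_Ico_consecutive _ (Nat.zero_le m) hmQ]
  rw [Finset.sum_congr rfl (fun i hi => if_pos (Finset.mem_Ico.mp hi).2),
      Finset.sum_congr rfl (fun i hi => if_neg (by have := (Finset.mem_Ico.mp hi).1; omega))]
  simp [← Finset.range_eq_Ico]
  omega

lemma ZB00 (β K : ℝ) (Q : ℕ) (hQ : 0 < Q) (η : ℤ) :
    ZB β K Q hQ η 0 0 = Zhat β K Q η := by
  unfold ZB Zhat
  refine Finset.sum_congr rfl fun τ _ => ?_
  congr 1; ring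

lemma ZBm0 (β K : ℝ) (Q : ℕ) (hQ : 0 < Q) (η : ℤ) (sm : ℝ) (hsm : sm = 1 ∨ sm = -1) :
    ZB β K Q hQ η sm 0 = Real.cosh (β*K) * (Zhat β K Q η - Real.tanh (β*K) * sm *
      ∑ τ ∈ cellSet Q η, (spin (τ (site1 Q hQ)) : ℝ) * Real.exp (-β * hcell K Q τ)) := by
  unfold ZB Zhat
  have hterm : ∀ τ ∈ cellSet Q η,
      Real.exp (-β * (K * sm * (spin (τ (site1 Q hQ)) : ℝ) + hcell K Q τ +
        K * (spin (τ (siteQ Q hQ)) : ℝ) * 0))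
      = Real.cosh (β*K) * Real.exp (-β * hcell K Q τ)
        - (Real.cosh (β*K) * (Real.tanh (β*K) * sm)) *
          ((spin (τ (site1 Q hQ)) : ℝ) * Real.exp (-β * hcell K Q τ)) := by
    intro τ _
    have h1 : -β * (K * sm * (spin (τ (site1 Q hQ)) : ℝ) + hcell K Q τ +
        K * (spin (τ (siteQ Q hQ)) : ℝ) * 0)
      = (-(β * K * sm * (spin (τ (site1 Q hQ)) : ℝ))) + (-β * hcell K Q τ) := by ring
    rw [h1, Real.exp_add, exp_boundary (β*K) sm _ hsm (spin_cases _)]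
    ring
  rw [Finset.sum_congr rfl hterm, Finset.sum_sub_distrib, ← Finset.mul_sum, ← Finset.mul_sum]
  ring

lemma ZB0p (β K : ℝ) (Q : ℕ) (hQ : 0 < Q) (η : ℤ) (sp : ℝ) (hsp : sp = 1 ∨ sp = -1) :
    ZB β K Q hQ η 0 sp = Real.cosh (β*K) * (Zhat β K Q η - Real.tanh (β*K) * sp *
      ∑ τ ∈ cellSet Q η, (spin (τ (siteQ Q hQ)) : ℝ) * Real.exp (-β * hcell K Q τ)) := by
  unfold ZB Zhat
  have hterm : ∀ τ ∈ cellSet Q η,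
      Real.exp (-β * (K * 0 * (spin (τ (site1 Q hQ)) : ℝ) + hcell K Q τ +
        K * (spin (τ (siteQ Q hQ)) : ℝ) * sp))
      = Real.cosh (β*K) * Real.exp (-β * hcell K Q τ)
        - (Real.cosh (β*K) * (Real.tanh (β*K) * sp)) *
          ((spin (τ (siteQ Q hQ)) : ℝ) * Real.exp (-β * hcell K Q τ)) := by
    intro τ _
    have h1 : -β * (K * 0 * (spin (τ (site1 Q hQ)) : ℝ) + hcell K Q τ +
        K * (spin (τ (siteQ Q hQ)) : ℝ) * sp)
      = (-(β * K * sp * (spin (τ (siteQ Q hQ)) : ℝ))) + (-β * hcell K Q τ) := by ring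
    rw [h1, Real.exp_add, exp_boundary (β*K) sp _ hsp (spin_cases _)]
    ring
  rw [Finset.sum_congr rfl hterm, Finset.sum_sub_distrib, ← Finset.mul_sum, ← Finset.mul_sum]
  ring

lemma ZBmp (β K : ℝ) (Q : ℕ) (hQ : 0 < Q) (η : ℤ) (sm sp : ℝ)
    (hsm : sm = 1 ∨ sm = -1) (hsp : sp = 1 ∨ sp = -1) :
    ZB β K Q hQ η sm sp = Real.cosh (β*K) ^ 2 * (Zhat β K Q η
      - Real.tanh (β*K) * sm *
        ∑ τ ∈ cellSet Q η, (spin (τ (site1 Q hQ)) : ℝ) * Real.exp (-β * hcell K Q τ)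
      - Real.tanh (β*K) * sp *
        ∑ τ ∈ cellSet Q η, (spin (τ (siteQ Q hQ)) : ℝ) * Real.exp (-β * hcell K Q τ)
      + Real.tanh (β*K) ^ 2 * sm * sp *
        ∑ τ ∈ cellSet Q η, (spin (τ (site1 Q hQ)) : ℝ) * (spin (τ (siteQ Q hQ)) : ℝ) *
          Real.exp (-β * hcell K Q τ)) := by
  unfold ZB Zhat
  have hterm : ∀ τ ∈ cellSet Q η,
      Real.exp (-β * (K * sm * (spin (τ (site1 Q hQ)) : ℝ) + hcell K Q τ +
        K * (spin (τ (siteQ Q hQ)) : ℝ) * sp))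
      = (Real.cosh (β*K) ^ 2 * Real.exp (-β * hcell K Q τ)
          - (Real.cosh (β*K) ^ 2 * (Real.tanh (β*K) * sm)) *
            ((spin (τ (site1 Q hQ)) : ℝ) * Real.exp (-β * hcell K Q τ))
          - (Real.cosh (β*K) ^ 2 * (Real.tanh (β*K) * sp)) *
            ((spin (τ (siteQ Q hQ)) : ℝ) * Real.exp (-β * hcell K Q τ)))
        + (Real.cosh (β*K) ^ 2 * (Real.tanh (β*K) ^ 2 * sm * sp)) *
            ((spin (τ (site1 Q hQ)) : ℝ) * (spin (τ (siteQ Q hQ)) : ℝ) *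
              Real.exp (-β * hcell K Q τ)) := by
    intro τ _
    have h1 : -β * (K * sm * (spin (τ (site1 Q hQ)) : ℝ) + hcell K Q τ +
        K * (spin (τ (siteQ Q hQ)) : ℝ) * sp)
      = (-(β * K * sm * (spin (τ (site1 Q hQ)) : ℝ))) + (-β * hcell K Q τ)
        + (-(β * K * sp * (spin (τ (siteQ Q hQ)) : ℝ))) := by ring
    rw [h1, Real.exp_add, Real.exp_add, exp_boundary (β*K) sm _ hsm (spin_cases _),
        exp_boundary (β*K) sp _ hsp (spin_cases _)]
    ring
  rw [Finset.sum_congr rfl hterm, Finset.sum_add_distrib, Finset.sum_sub_distrib,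
      Finset.sum_sub_distrib, ← Finset.mul_sum, ← Finset.mul_sum, ← Finset.mul_sum,
      ← Finset.mul_sum]
  ring

lemma final_algebra (t c Z A B C sm sp : ℝ) (hc : 0 < c) (hZ : 0 < Z)
    (hA : |A| ≤ Z) (hB : |B| ≤ Z) (ht : |t| < 1)
    (hsm : sm = 1 ∨ sm = -1) (hsp : sp = 1 ∨ sp = -1) :
    |c ^ 2 * (Z - t * sm * A - t * sp * B + t ^ 2 * sm * sp * C) * Z /
        (c * (Z - t * sp * B) * (c * (Z - t * sm * A))) - 1|
      ≤ t ^ 2 * |C / Z - A / Z * (B / Z)| / (1 - |t|) ^ 2 := by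
  have hsm1 : |sm| = 1 := by rcases hsm with rfl | rfl <;> norm_num
  have hsp1 : |sp| = 1 := by rcases hsp with rfl | rfl <;> norm_num
  have htn : 0 ≤ |t| := abs_nonneg t
  have hD1 : Z * (1 - |t|) ≤ Z - t * sm * A := by
    have h1 : t * sm * A ≤ |t| * Z := by
      calc t * sm * A ≤ |t * sm * A| := le_abs_self _
        _ = |t| * |sm| * |A| := by rw [abs_mul, abs_mul]
        _ = |t| * |A| := by rw [hsm1]; ring
        _ ≤ |t| * Z := mul_le_mul_of_nonneg_left hA htn
    nlinarith
  have hD2 : Z * (1 - |t|) ≤ Z - t * sp * B := by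
    have h1 : t * sp * B ≤ |t| * Z := by
      calc t * sp * B ≤ |t * sp * B| := le_abs_self _
        _ = |t| * |sp| * |B| := by rw [abs_mul, abs_mul]
        _ = |t| * |B| := by rw [hsp1]; ring
        _ ≤ |t| * Z := mul_le_mul_of_nonneg_left hB htn
    nlinarith
  have hZt : 0 < Z * (1 - |t|) := mul_pos hZ (by linarith)
  have hD1p : 0 < Z - t * sm * A := lt_of_lt_of_le hZt hD1
  have hD2p : 0 < Z - t * sp * B := lt_of_lt_of_le hZt hD2
  have hkey : c ^ 2 * (Z - t * sm * A - t * sp * B + t ^ 2 * sm * sp * C) * Z /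
        (c * (Z - t * sp * B) * (c * (Z - t * sm * A))) - 1
      = sm * sp * (t ^ 2 * (C * Z - A * B)) / ((Z - t * sp * B) * (Z - t * sm * A)) := by
    field_simp
    ring
  rw [hkey]
  have habs : |sm * sp * (t ^ 2 * (C * Z - A * B)) / ((Z - t * sp * B) * (Z - t * sm * A))|
      = t ^ 2 * |C * Z - A * B| / ((Z - t * sp * B) * (Z - t * sm * A)) := by
    rw [abs_div, abs_of_pos (mul_pos hD2p hD1p), abs_mul, abs_mul, abs_mul,
        hsm1, hsp1, abs_pow, sq_abs]
    ring
  rw [habs]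
  have hrhs : |C / Z - A / Z * (B / Z)| = |C * Z - A * B| / Z ^ 2 := by
    have h : C / Z - A / Z * (B / Z) = (C * Z - A * B) / Z ^ 2 := by
      field_simp
    rw [h, abs_div, abs_of_pos (by positivity : (0:ℝ) < Z ^ 2)]
  rw [hrhs, mul_div_assoc', div_div]
  have h2 : Z ^ 2 * (1 - |t|) ^ 2 ≤ (Z - t * sp * B) * (Z - t * sm * A) := by
    nlinarith [hZt]
  have h1t : (0:ℝ) < 1 - |t| := by linarith
  have hpos : 0 < Z ^ 2 * (1 - |t|) ^ 2 := mul_pos (pow_pos hZ 2) (pow_pos h1t 2)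
  gcongr

/-- a posteriori bound on the short-range error term `f^s`, with
`λ = tanh(βK)`. -/
theorem statement15 (β K : ℝ) (hβ : 0 < β) (Q : ℕ) (hQ : 2 ≤ Q)
    (η : ℤ) (hη : |η| ≤ (Q : ℤ)) (hpar : (η + Q) % 2 = 0)
    (hlam : |Real.tanh (β * K)| < 1)
    (sm sp : ℝ) (hsm : sm = 1 ∨ sm = -1) (hsp : sp = 1 ∨ sp = -1) :
    |ZB β K Q (by omega) η sm sp * ZB β K Q (by omega) η 0 0 /
        (ZB β K Q (by omega) η 0 sp * ZB β K Q (by omega) η sm 0) - 1|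
      ≤ Real.tanh (β * K) ^ 2 *
          |Phi1Q β K Q (by omega) η - Phi1 β K Q (by omega) η * PhiQ β K Q (by omega) η| /
        (1 - |Real.tanh (β * K)|) ^ 2 := by
  have hQ0 : 0 < Q := by omega
  show |ZB β K Q hQ0 η sm sp * ZB β K Q hQ0 η 0 0 /
        (ZB β K Q hQ0 η 0 sp * ZB β K Q hQ0 η sm 0) - 1|
      ≤ Real.tanh (β * K) ^ 2 *
          |Phi1Q β K Q hQ0 η - Phi1 β K Q hQ0 η * PhiQ β K Q hQ0 η| /
        (1 - |Real.tanh (β * K)|) ^ 2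
  have hne := cell_nonempty Q η hη hpar
  have hZpos : 0 < Zhat β K Q η :=
    Finset.sum_pos (fun τ _ => Real.exp_pos _) hne
  have habsA : |∑ τ ∈ cellSet Q η,
      (spin (τ (site1 Q hQ0)) : ℝ) * Real.exp (-β * hcell K Q τ)| ≤ Zhat β K Q η := by
    refine (Finset.abs_sum_le_sum_abs _ _).trans ?_
    refine Finset.sum_le_sum fun τ _ => ?_
    rw [abs_mul, abs_spin, one_mul, abs_of_pos (Real.exp_pos _)]
  have habsB : |∑ τ ∈ cellSet Q η,
      (spin (τ (siteQ Q hQ0)) : ℝ) * Real.exp (-β * hcell K Q τ)| ≤ Zhat β K Q η := by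
    refine (Finset.abs_sum_le_sum_abs _ _).trans ?_
    refine Finset.sum_le_sum fun τ _ => ?_
    rw [abs_mul, abs_spin, one_mul, abs_of_pos (Real.exp_pos _)]
  have hPhi1 : Phi1 β K Q hQ0 η = (∑ τ ∈ cellSet Q η,
      (spin (τ (site1 Q hQ0)) : ℝ) * Real.exp (-β * hcell K Q τ)) / Zhat β K Q η := rfl
  have hPhiQ : PhiQ β K Q hQ0 η = (∑ τ ∈ cellSet Q η,
      (spin (τ (siteQ Q hQ0)) : ℝ) * Real.exp (-β * hcell K Q τ)) / Zhat β K Q η := rfl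
  have hPhi1Q : Phi1Q β K Q hQ0 η = (∑ τ ∈ cellSet Q η,
      (spin (τ (site1 Q hQ0)) : ℝ) * (spin (τ (siteQ Q hQ0)) : ℝ) *
        Real.exp (-β * hcell K Q τ)) / Zhat β K Q η := by
    unfold Phi1Q
    congr 1
    refine Finset.sum_congr rfl fun τ _ => ?_
    push_cast
    ring
  rw [ZBmp β K Q hQ0 η sm sp hsm hsp, ZB00 β K Q hQ0 η, ZB0p β K Q hQ0 η sp hsp,
      ZBm0 β K Q hQ0 η sm hsm, hPhi1Q, hPhi1, hPhiQ]
  exact final_algebra (Real.tanh (β*K)) (Real.cosh (β*K)) _ _ _ _ sm sp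
    (Real.cosh_pos (β*K)) hZpos habsA habsB hlam hsm hsp
end
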